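/- Given a formal series a(ωz) arising from a(z) ∈ A_1 by substituting z ↦ ωz (ω = e^{iπ/(r+1)}), there is a unique formal series d(z) = 1 + Σ_{k≥1} d_k z^{-(r+1)k} such that −S_z^⋆(d(z)/z) = a(ωz). -/

import Mathlib

open HahnSeries Pointwise

/-- The operator `S_z = z^{1-r} ∂_z - (r-1)/(2 z^r) - z` acting on formal Laurent
series with finitely many positive powers of `z`, written in the variable
`t = z⁻¹` (so `coeff m` is the coefficient of `z^{-m}`). -/
noncomputable def Sop (r : ℕ) (f : LaurentSeries ℂ) : LaurentSeries ℂ where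
  coeff m := ((r + 1 : ℂ) / 2 - m) * f.coeff (m - r) - f.coeff (m + 1)
  isPWO_support' := by
    have h : (Function.support fun m : ℤ =>
        ((r + 1 : ℂ) / 2 - m) * f.coeff (m - r) - f.coeff (m + 1))
        ⊆ (f.support + {(r : ℤ)}) ∪ (f.support + ({(-1 : ℤ)} : Set ℤ)) := by
      intro m hm
      simp only [Function.mem_support] at hm
      by_cases h1 : f.coeff (m - (r : ℤ)) = 0
      · have h2 : f.coeff (m + 1) ≠ 0 := fun h2 => hm (by rw [h1, h2]; ring)
        right
        exact Set.mem_add.mpr ⟨m + 1, by simpa using h2, -1, rfl, by ring⟩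
      · left
        exact Set.mem_add.mpr ⟨m - r, by simpa using h1, r, rfl, by ring⟩
    exact ((f.isPWO_support.add (Set.isPWO_singleton (r : ℤ))).union
      (f.isPWO_support.add (Set.isPWO_singleton (-1 : ℤ)))).mono h

/-- The formal adjoint `S_z^⋆ = -z^{1-r} ∂_z + (r-1)/(2 z^r) - z`. -/
noncomputable def Sstar (r : ℕ) (f : LaurentSeries ℂ) : LaurentSeries ℂ where
  coeff m := ((m : ℂ) - (r + 1) / 2) * f.coeff (m - r) - f.coeff (m + 1)
  isPWO_support' := by
    have h : (Function.support fun m : ℤ =>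
        ((m : ℂ) - (r + 1) / 2) * f.coeff (m - r) - f.coeff (m + 1))
        ⊆ (f.support + {(r : ℤ)}) ∪ (f.support + ({(-1 : ℤ)} : Set ℤ)) := by
      intro m hm
      simp only [Function.mem_support] at hm
      by_cases h1 : f.coeff (m - (r : ℤ)) = 0
      · have h2 : f.coeff (m + 1) ≠ 0 := fun h2 => hm (by rw [h1, h2]; ring)
        right
        exact Set.mem_add.mpr ⟨m + 1, by simpa using h2, -1, rfl, by ring⟩
      · left
        exact Set.mem_add.mpr ⟨m - r, by simpa using h1, r, rfl, by ring⟩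
    exact ((f.isPWO_support.add (Set.isPWO_singleton (r : ℤ))).union
      (f.isPWO_support.add (Set.isPWO_singleton (-1 : ℤ)))).mono h

/-- Substitution `z ↦ ω z` on a formal Laurent series (`coeff m` is the
coefficient of `z^{-m}`, which gets multiplied by `ω^{-m}`). -/
noncomputable def rot (ω : ℂ) (f : LaurentSeries ℂ) : LaurentSeries ℂ where
  coeff m := ω ^ (-m) * f.coeff m
  isPWO_support' := f.isPWO_support.mono (fun m hm => by
    simp only [Function.mem_support] at hm ⊢
    exact fun h => hm (by rw [h, mul_zero]))

lemma single_one_mul_coeff (d : LaurentSeries ℂ) (n : ℤ) :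
    (HahnSeries.single (1 : ℤ) (1 : ℂ) * d).coeff n = d.coeff (n - 1) := by
  have := HahnSeries.coeff_single_mul_add (r := (1 : ℂ)) (x := d) (a := n - 1) (b := (1 : ℤ))
  simpa using this

/-- The solution coefficients, defined recursively. -/
noncomputable def dc (r : ℕ) (ω : ℂ) (a : LaurentSeries ℂ) : ℕ → ℂ
  | 0 => 1
  | (k + 1) => ω ^ (-(((r : ℤ) + 1) * (k + 1))) * a.coeff (((r : ℤ) + 1) * (k + 1))
      + (((((r : ℤ) + 1) * ((k : ℤ) + 1) : ℤ) : ℂ) - ((r : ℂ) + 1) / 2) * dc r ω a k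

open Classical in
/-- The candidate series `d`. -/
noncomputable def Dser (r : ℕ) (ω : ℂ) (a : LaurentSeries ℂ) : LaurentSeries ℂ where
  coeff m := if h : ∃ k : ℕ, m = ((r : ℤ) + 1) * k then dc r ω a h.choose else 0
  isPWO_support' := by
    have hIci : (Set.Ici (0 : ℤ)).IsPWO := Set.isPWO_iff_isWF.mpr bddBelow_Ici.wellFoundedOn_lt
    refine hIci.mono fun m hm => ?_
    simp only [Function.mem_support] at hm
    by_cases h : ∃ k : ℕ, m = ((r : ℤ) + 1) * k
    · obtain ⟨k, hk⟩ := h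
      have : (0 : ℤ) ≤ ((r : ℤ) + 1) * k := by positivity
      simpa [hk] using this
    · exact absurd (dif_neg h) hm

open Classical in
lemma Dser_coeff (r : ℕ) (ω : ℂ) (a : LaurentSeries ℂ) (m : ℤ) :
    (Dser r ω a).coeff m
      = if h : ∃ k : ℕ, m = ((r : ℤ) + 1) * k then dc r ω a h.choose else 0 := rfl

lemma Dser_coeff_mul (r : ℕ) (ω : ℂ) (a : LaurentSeries ℂ) (k : ℕ) :
    (Dser r ω a).coeff (((r : ℤ) + 1) * k) = dc r ω a k := by
  have h : ∃ k' : ℕ, ((r : ℤ) + 1) * k = ((r : ℤ) + 1) * k' := ⟨k, rfl⟩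
  have hch : h.choose = k := by
    have hs := h.choose_spec
    have : (k : ℤ) = (h.choose : ℤ) :=
      mul_left_cancel₀ (by positivity : ((r : ℤ) + 1) ≠ 0) hs
    exact_mod_cast this.symm
  rw [Dser_coeff, dif_pos h, hch]

lemma Dser_coeff_zero (r : ℕ) (ω : ℂ) (a : LaurentSeries ℂ) {m : ℤ}
    (h : ¬ ∃ k : ℕ, m = ((r : ℤ) + 1) * k) : (Dser r ω a).coeff m = 0 := by
  rw [Dser_coeff, dif_neg h]

/-- Extraction of the coefficientwise equation from the series equation. -/
lemma coeff_eq_of_eq (r : ℕ) (ω : ℂ) (d a : LaurentSeries ℂ)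
    (h : -(Sstar r (HahnSeries.single (1 : ℤ) 1 * d)) = rot ω a) (m : ℤ) :
    d.coeff m - ((m : ℂ) - ((r : ℂ) + 1) / 2) * d.coeff (m - ((r : ℤ) + 1))
      = ω ^ (-m) * a.coeff m := by
  have h1 := congrArg (fun f : LaurentSeries ℂ => f.coeff m) h
  simp only [Sstar, rot, HahnSeries.coeff_neg, single_one_mul_coeff] at h1
  have e1 : m - (r : ℤ) - 1 = m - ((r : ℤ) + 1) := by ring
  have e2 : m + 1 - 1 = m := by ring
  rw [e1, e2] at h1
  linear_combination h1

/-- The coefficientwise equation holds for the candidate series. -/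
lemma Dser_eq (r : ℕ) (ω : ℂ) (a : LaurentSeries ℂ) (ha0 : a.coeff 0 = 1)
    (hsupp : ∀ m : ℤ, a.coeff m ≠ 0 → ∃ k : ℕ, m = ((r : ℤ) + 1) * k) (m : ℤ) :
    (Dser r ω a).coeff m
      - ((m : ℂ) - ((r : ℂ) + 1) / 2) * (Dser r ω a).coeff (m - ((r : ℤ) + 1))
      = ω ^ (-m) * a.coeff m := by
  by_cases h : ∃ k : ℕ, m = ((r : ℤ) + 1) * k
  · obtain ⟨k, hk⟩ := h
    cases k with
    | zero =>
      have hm0 : m = 0 := by simpa using hk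
      subst hm0
      have hneg : (Dser r ω a).coeff (0 - ((r : ℤ) + 1)) = 0 := by
        refine Dser_coeff_zero r ω a ?_
        rintro ⟨k', hk'⟩
        have : (0 : ℤ) ≤ ((r : ℤ) + 1) * k' := by positivity
        omega
      have h0 : (Dser r ω a).coeff 0 = 1 := by
        have := Dser_coeff_mul r ω a 0
        simpa [dc] using this
      rw [hneg, h0, ha0]
      simp
    | succ k =>
      have hprev : m - ((r : ℤ) + 1) = ((r : ℤ) + 1) * k := by
        rw [hk]; push_cast; ring
      rw [hprev, Dser_coeff_mul, hk, Dser_coeff_mul]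
      simp only [dc]
      push_cast
      ring
  · have h0 : (Dser r ω a).coeff m = 0 := Dser_coeff_zero r ω a h
    have h1 : (Dser r ω a).coeff (m - ((r : ℤ) + 1)) = 0 := by
      refine Dser_coeff_zero r ω a ?_
      rintro ⟨k', hk'⟩
      exact h ⟨k' + 1, by push_cast; linarith⟩
    have ha : a.coeff m = 0 := by
      by_contra hne; exact h (hsupp m hne)
    rw [h0, h1, ha]; ring

/-- Given `a ∈ A_1` (so `a(ωz)` is well defined, `ω = exp(iπ/(r+1))`), there is a
unique formal series `d(z) = 1 + Σ_{k≥1} d_k z^{-(r+1)k}` with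
`-S_z^⋆(d(z)/z) = a(ωz)`.  (`d(z)/z = single 1 1 * d` in the variable `t = z⁻¹`.) -/
theorem exists_unique_d (r : ℕ) (hr : 2 ≤ r) (a : LaurentSeries ℂ)
    (ha0 : a.coeff 0 = 1)
    (hsupp : ∀ m : ℤ, a.coeff m ≠ 0 → ∃ k : ℕ, m = ((r : ℤ) + 1) * k) :
    let ω : ℂ := Complex.exp (Real.pi * Complex.I / (r + 1))
    ∃! d : LaurentSeries ℂ,
      (d.coeff 0 = 1 ∧ ∀ m : ℤ, d.coeff m ≠ 0 → ∃ k : ℕ, m = ((r : ℤ) + 1) * k) ∧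
      -(Sstar r (HahnSeries.single (1 : ℤ) 1 * d)) = rot ω a := by
  intro ω
  refine ⟨Dser r ω a, ⟨⟨?_, ?_⟩, ?_⟩, ?_⟩
  · have := Dser_coeff_mul r ω a 0
    simpa [dc] using this
  · intro m hm
    by_contra h
    exact hm (Dser_coeff_zero r ω a h)
  · ext m
    have hE := Dser_eq r ω a ha0 hsupp m
    simp only [Sstar, rot, HahnSeries.coeff_neg, single_one_mul_coeff]
    have e1 : m - (r : ℤ) - 1 = m - ((r : ℤ) + 1) := by ring
    have e2 : m + 1 - 1 = m := by ring
    rw [e1, e2]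
    linear_combination hE
  · rintro d ⟨⟨h0, hs⟩, heq⟩
    have hE := coeff_eq_of_eq r ω d a heq
    have key : ∀ k : ℕ, d.coeff (((r : ℤ) + 1) * k) = dc r ω a k := by
      intro k
      induction k with
      | zero => simpa [dc] using h0
      | succ k ih =>
        have hm : (((r : ℤ) + 1) * ((k + 1 : ℕ) : ℤ)) = ((r : ℤ) + 1) * ((k : ℤ) + 1) := by
          push_cast; ring
        rw [hm]
        have h1 := hE (((r : ℤ) + 1) * ((k : ℤ) + 1))
        rw [show ((r : ℤ) + 1) * ((k : ℤ) + 1) - ((r : ℤ) + 1) = ((r : ℤ) + 1) * k by ring,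
          ih] at h1
        simp only [dc]
        linear_combination h1
    ext m
    by_cases h : ∃ k : ℕ, m = ((r : ℤ) + 1) * k
    · obtain ⟨k, hk⟩ := h
      rw [hk, key, Dser_coeff_mul]
    · rw [Dser_coeff_zero r ω a h]
      by_contra hne
      exact h (hs m hne)
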